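/- For Bayes measures with Jeffreys (Dirichlet-1/2) priors over finite alphabets of sizes α, β, and αβ, the log Bayes factor satisfies log[Q^n(i,j)/(Q^n(i)Q^n(j))] = n·I^n(i,j) - ((α-1)(β-1)/2) log n + O(1), where I^n(i,j) is the empirical mutual information of the pair from n samples. -/

import Mathlib

open Real Finset Nat

lemma fact_stirling : ∃ A : ℝ, 0 ≤ A ∧ ∀ n : ℕ, 1 ≤ n →
    |Real.log (n ! : ℝ) - ((n : ℝ) * Real.log n - n + 1/2 * Real.log n)| ≤ A := by
  obtain ⟨c, hc⟩ : ∃ c : ℝ, ∀ n : ℕ, c ≤ Real.log (Stirling.stirlingSeq (n + 1)) :=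
    ⟨_, Stirling.log_stirlingSeq_bounded_by_constant⟩
  refine ⟨max |c| |Real.log (Stirling.stirlingSeq 1)| + 1/2 * Real.log 2, by positivity, ?_⟩
  intro n hn
  obtain ⟨m, rfl⟩ : ∃ m, n = m + 1 := ⟨n - 1, by omega⟩
  set s := Stirling.stirlingSeq (m + 1) with hs
  have hn0 : (0 : ℝ) < (m + 1 : ℕ) := by positivity
  have hform := Stirling.log_stirlingSeq_formula (m + 1)
  have hlog2 : Real.log (2 * ((m+1 : ℕ) : ℝ)) = Real.log 2 + Real.log ((m+1:ℕ) : ℝ) :=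
    Real.log_mul (by norm_num) (ne_of_gt hn0)
  have hdive : Real.log (((m+1:ℕ) : ℝ) / Real.exp 1) = Real.log ((m+1:ℕ):ℝ) - 1 := by
    rw [Real.log_div (ne_of_gt hn0) (Real.exp_ne_zero 1), Real.log_exp]
  have key : Real.log ((m+1)! : ℝ) - (((m+1:ℕ) : ℝ) * Real.log ((m+1:ℕ):ℝ) - ((m+1:ℕ):ℝ)
      + 1/2 * Real.log ((m+1:ℕ):ℝ)) = Real.log s + 1/2 * Real.log 2 := by
    have := hform
    rw [hlog2, hdive] at this
    linarith [this]
  have hsle : Real.log s ≤ Real.log (Stirling.stirlingSeq 1) := by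
    have := Stirling.log_stirlingSeq'_antitone (Nat.zero_le m)
    simpa using this
  have hsge : c ≤ Real.log s := hc m
  have habs : |Real.log s| ≤ max |c| |Real.log (Stirling.stirlingSeq 1)| := by
    rcases abs_cases (Real.log s) with ⟨h1, _⟩ | ⟨h1, _⟩
    · rw [h1]; exact le_max_of_le_right (le_abs_self _ |>.trans' hsle)
    · rw [h1]; exact le_max_of_le_left ((neg_le_neg hsge).trans (neg_le_abs c))
  calc |Real.log ((m+1)! : ℝ) - _| = |Real.log s + 1/2 * Real.log 2| := by rw [key]
    _ ≤ |Real.log s| + |1/2 * Real.log 2| := abs_add_le _ _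
    _ ≤ max |c| |Real.log (Stirling.stirlingSeq 1)| + 1/2 * Real.log 2 := by
        have : |1/2 * Real.log 2| = 1/2 * Real.log 2 := abs_of_nonneg (by positivity)
        rw [this]; exact add_le_add_left habs _

lemma gamma_nat_add_half (c : ℕ) :
    Real.Gamma ((c : ℝ) + 1/2) = Real.sqrt π * ((2*c)! : ℝ) / (4^c * (c ! : ℝ)) := by
  induction c with
  | zero => norm_num [show ((0:ℕ):ℝ) + 1/2 = 1/2 from by norm_num, Real.Gamma_one_half_eq]
  | succ m ih =>
    have h1 : ((m + 1 : ℕ) : ℝ) + 1/2 = ((m : ℝ) + 1/2) + 1 := by push_cast; ring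
    rw [h1, Real.Gamma_add_one (by positivity), ih]
    have h2 : (2 * (m + 1)) = (2*m + 1) + 1 := by ring
    rw [h2, Nat.factorial_succ, Nat.factorial_succ, Nat.factorial_succ]
    push_cast
    have h4 : (4:ℝ)^(m+1) = 4 * 4^m := by ring
    rw [h4]
    have hf : ((m)! : ℝ) ≠ 0 := by exact_mod_cast Nat.factorial_ne_zero m
    field_simp
    ring

lemma gamma_half_stirling : ∃ A : ℝ, 0 ≤ A ∧ ∀ c : ℕ,
    |Real.log (Real.Gamma ((c : ℝ) + 1/2)) - ((c : ℝ) * Real.log c - c)| ≤ A := by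
  obtain ⟨A₀, hA₀, hst⟩ := fact_stirling
  refine ⟨|Real.log (Real.sqrt π)| + 1/2 * Real.log 2 + 2 * A₀, by positivity, ?_⟩
  intro c
  rcases Nat.eq_zero_or_pos c with rfl | hc
  · simp only [Nat.cast_zero, Real.log_zero, mul_zero, zero_mul, sub_zero, zero_add]
    rw [Real.Gamma_one_half_eq]
    have h2 : (0:ℝ) ≤ Real.log 2 := Real.log_nonneg (by norm_num)
    linarith [hA₀, h2]
  · have hcR : (0:ℝ) < (c : ℝ) := by exact_mod_cast hc
    have hf1 : (0:ℝ) < ((2*c)! : ℝ) := by exact_mod_cast Nat.factorial_pos (2*c)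
    have hf2 : (0:ℝ) < (c ! : ℝ) := by exact_mod_cast Nat.factorial_pos c
    have h4 : (0:ℝ) < (4:ℝ)^c := by positivity
    have hπ : (0:ℝ) < Real.sqrt π := Real.sqrt_pos.mpr Real.pi_pos
    have hlogG : Real.log (Real.Gamma ((c:ℝ) + 1/2)) =
        Real.log (Real.sqrt π) + Real.log ((2*c)! : ℝ)
          - ((c:ℝ) * Real.log 4 + Real.log (c ! : ℝ)) := by
      rw [gamma_nat_add_half, Real.log_div (by positivity) (by positivity),
        Real.log_mul (ne_of_gt hπ) (ne_of_gt hf1),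
        Real.log_mul (ne_of_gt h4) (ne_of_gt hf2), Real.log_pow]
    have hlog4 : Real.log (4:ℝ) = 2 * Real.log 2 := by
      rw [show (4:ℝ) = 2^2 by norm_num, Real.log_pow]; push_cast; ring
    have hcast : ((2*c : ℕ) : ℝ) = 2 * (c:ℝ) := by push_cast; ring
    have hlog2c : Real.log ((2*c : ℕ) : ℝ) = Real.log 2 + Real.log (c:ℝ) := by
      rw [hcast, Real.log_mul (by norm_num) (ne_of_gt hcR)]
    have key : Real.log (Real.Gamma ((c:ℝ) + 1/2)) - ((c:ℝ) * Real.log c - c) =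
        (Real.log (Real.sqrt π) + 1/2 * Real.log 2)
        + (Real.log ((2*c)! : ℝ) - (((2*c:ℕ):ℝ) * Real.log ((2*c:ℕ):ℝ) - ((2*c:ℕ):ℝ)
            + 1/2 * Real.log ((2*c:ℕ):ℝ)))
        - (Real.log (c ! : ℝ) - ((c:ℝ) * Real.log c - c + 1/2 * Real.log c)) := by
      rw [hlogG, hlog4, hlog2c, hcast]; ring
    have h1 := hst (2*c) (by omega)
    have h2 := hst c hc
    obtain ⟨u1, u2⟩ := abs_le.mp h1
    obtain ⟨v1, v2⟩ := abs_le.mp h2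
    have c1 := le_abs_self (Real.log (Real.sqrt π))
    have c2 := neg_abs_le (Real.log (Real.sqrt π))
    rw [key, abs_le]
    have hl2 : (0:ℝ) ≤ Real.log 2 := Real.log_nonneg (by norm_num)
    constructor <;> linarith

lemma nlog_shift (j n : ℕ) (hn : 1 ≤ n) :
    (0 ≤ ((n:ℝ)+j) * Real.log ((n:ℝ)+j) - ((n:ℝ)+j) * Real.log n ∧
      ((n:ℝ)+j) * Real.log ((n:ℝ)+j) - ((n:ℝ)+j) * Real.log n ≤ j*(1+j)) ∧
    (0 ≤ Real.log ((n:ℝ)+j) - Real.log n ∧ Real.log ((n:ℝ)+j) - Real.log n ≤ j) := by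
  have hn0 : (0:ℝ) < n := by exact_mod_cast hn
  have hj0 : (0:ℝ) ≤ j := Nat.cast_nonneg j
  have hnj : (0:ℝ) < (n:ℝ) + j := by linarith
  have hdiff : Real.log ((n:ℝ)+j) - Real.log n = Real.log (((n:ℝ)+j)/n) :=
    (Real.log_div hnj.ne' hn0.ne').symm
  have hge : 0 ≤ Real.log ((n:ℝ)+j) - Real.log n := by
    rw [hdiff]
    apply Real.log_nonneg
    rw [le_div_iff₀ hn0]; linarith
  have hle : Real.log ((n:ℝ)+j) - Real.log n ≤ (j:ℝ)/n := by
    rw [hdiff]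
    have h1 := Real.log_le_sub_one_of_pos (show (0:ℝ) < ((n:ℝ)+j)/n by positivity)
    have h2 : ((n:ℝ)+j)/n - 1 = (j:ℝ)/n := by field_simp; ring
    linarith
  have hjn : (j:ℝ)/n ≤ j := by
    apply div_le_self hj0
    exact_mod_cast hn
  refine ⟨⟨?_, ?_⟩, hge, hle.trans hjn⟩
  · have : ((n:ℝ)+j) * Real.log ((n:ℝ)+j) - ((n:ℝ)+j) * Real.log n
        = ((n:ℝ)+j) * (Real.log ((n:ℝ)+j) - Real.log n) := by ring
    rw [this]; positivity
  · have h3 : ((n:ℝ)+j) * Real.log ((n:ℝ)+j) - ((n:ℝ)+j) * Real.log n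
        = ((n:ℝ)+j) * (Real.log ((n:ℝ)+j) - Real.log n) := by ring
    rw [h3]
    calc ((n:ℝ)+j) * (Real.log ((n:ℝ)+j) - Real.log n) ≤ ((n:ℝ)+j) * ((j:ℝ)/n) := by
          apply mul_le_mul_of_nonneg_left hle hnj.le
      _ = (j:ℝ) + (j:ℝ)^2/n := by field_simp
      _ ≤ (j:ℝ) + (j:ℝ)^2 := by
          have : (j:ℝ)^2/n ≤ (j:ℝ)^2 := div_le_self (by positivity) (by exact_mod_cast hn)
          linarith
      _ = (j:ℝ)*(1+(j:ℝ)) := by ring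

lemma gamma_shift (k : ℕ) (hk : 1 ≤ k) : ∃ A : ℝ, 0 ≤ A ∧ ∀ n : ℕ, 1 ≤ n →
    |Real.log (Real.Gamma ((n:ℝ) + (k:ℝ)/2))
      - ((n:ℝ) * Real.log n - n + ((k:ℝ)-1)/2 * Real.log n)| ≤ A := by
  obtain ⟨A₀, hA₀, h₀⟩ := fact_stirling
  obtain ⟨A₁, hA₁, h₁⟩ := gamma_half_stirling
  rcases Nat.even_or_odd k with ⟨m, hm⟩ | ⟨m, hm⟩
  · -- k = 2m, m ≥ 1
    have hm1 : 1 ≤ m := by omega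
    obtain ⟨j, hj⟩ : ∃ j, m = j + 1 := ⟨m - 1, by omega⟩
    refine ⟨A₀ + ((j:ℝ)*(1+j) + j/2 + j), by positivity, ?_⟩
    intro n hn
    have hcast : (n:ℝ) + (k:ℝ)/2 = ((n+j : ℕ):ℝ) + 1 := by
      subst hm hj; push_cast; ring
    have hG : Real.Gamma ((n:ℝ) + (k:ℝ)/2) = ((n+j)! : ℝ) := by
      rw [hcast, Real.Gamma_nat_eq_factorial]
    obtain ⟨⟨e1a, e1b⟩, e2a, e2b⟩ := nlog_shift j n hn
    have hst := h₀ (n+j) (by omega)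
    have hc2 : ((n+j:ℕ):ℝ) = (n:ℝ) + j := by push_cast; ring
    rw [hc2] at hst
    have hk2 : ((k:ℝ)-1)/2 = (j:ℝ) + 1/2 := by subst hm hj; push_cast; ring
    rw [hG, hk2]
    set L := Real.log ((n:ℝ)+j)
    set Ln := Real.log (n:ℝ)
    have key : Real.log ((n+j)! : ℝ) - ((n:ℝ) * Ln - n + ((j:ℝ) + 1/2) * Ln)
        = (Real.log ((n+j)! : ℝ) - (((n:ℝ)+j) * L - ((n:ℝ)+j) + 1/2 * L))
          + ((((n:ℝ)+j) * L - ((n:ℝ)+j) * Ln) - (j:ℝ)*(1+j))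
          + (1/2 * (L - Ln))
          + ((j:ℝ)*(1+j) - j) := by ring
    rw [key, abs_le]
    obtain ⟨ht1, ht2⟩ := abs_le.mp hst
    have hjnn : (0:ℝ) ≤ (j:ℝ) := Nat.cast_nonneg j
    constructor <;> linarith [e1a, e1b, e2a, e2b]
  · -- k = 2m+1
    refine ⟨A₁ + ((m:ℝ)*(1+m) + m), by positivity, ?_⟩
    intro n hn
    have hcast : (n:ℝ) + (k:ℝ)/2 = ((n+m : ℕ):ℝ) + 1/2 := by
      subst hm; push_cast; ring
    obtain ⟨⟨e1a, e1b⟩, e2a, e2b⟩ := nlog_shift m n hn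
    have hst := h₁ (n+m)
    have hc2 : ((n+m:ℕ):ℝ) = (n:ℝ) + m := by push_cast; ring
    rw [hc2] at hst
    have hk2 : ((k:ℝ)-1)/2 = (m:ℝ) := by subst hm; push_cast; ring
    rw [hcast, hc2, hk2]
    set L := Real.log ((n:ℝ)+m)
    set Ln := Real.log (n:ℝ)
    have key : Real.log (Real.Gamma (((n:ℝ)+m) + 1/2)) - ((n:ℝ) * Ln - n + (m:ℝ) * Ln)
        = (Real.log (Real.Gamma (((n:ℝ)+m) + 1/2)) - (((n:ℝ)+m) * L - ((n:ℝ)+m)))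
          + ((((n:ℝ)+m) * L - ((n:ℝ)+m) * Ln) - (m:ℝ)*(1+m))
          + ((m:ℝ)*(1+m) - m) := by ring
    rw [key, abs_le]
    obtain ⟨ht1, ht2⟩ := abs_le.mp hst
    have hmnn : (0:ℝ) ≤ (m:ℝ) := Nat.cast_nonneg m
    constructor <;> linarith [e1a, e1b, e2a, e2b]

lemma logQ_bound {ι : Type*} [Fintype ι] (hι : 1 ≤ Fintype.card ι) :
    ∃ A : ℝ, 0 ≤ A ∧ ∀ n : ℕ, 1 ≤ n → ∀ c : ι → ℕ, ∑ z, c z = n →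
    |Real.log (Real.Gamma ((Fintype.card ι : ℝ)/2)
          / Real.Gamma ((n:ℝ) + (Fintype.card ι : ℝ)/2)
        * ∏ z, Real.Gamma ((c z : ℝ) + 1/2) / Real.Gamma (1/2))
      - (∑ z, (c z : ℝ) * Real.log (c z) - (n:ℝ) * Real.log n
          - ((Fintype.card ι : ℝ) - 1)/2 * Real.log n)| ≤ A := by
  classical
  set κ := Fintype.card ι with hκ
  obtain ⟨A₁, hA₁, h₁⟩ := gamma_half_stirling
  obtain ⟨A₀, hA₀, h₀⟩ := gamma_shift κ hι
  set G₀ := Real.log (Real.Gamma ((κ:ℝ)/2)) with hG₀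
  set Gh := Real.log (Real.Gamma ((1:ℝ)/2)) with hGh
  refine ⟨|G₀| + (κ:ℝ) * |Gh| + A₀ + (κ:ℝ) * A₁, by positivity, ?_⟩
  intro n hn c hsum
  have hκ2 : (0:ℝ) < (κ:ℝ)/2 := by
    have : (0:ℝ) < (κ:ℝ) := by exact_mod_cast hι
    linarith
  have hn0 : (0:ℝ) < (n:ℝ) := by exact_mod_cast hn
  have hGp1 : (0:ℝ) < Real.Gamma ((κ:ℝ)/2) := Real.Gamma_pos_of_pos hκ2
  have hGp2 : (0:ℝ) < Real.Gamma ((n:ℝ) + (κ:ℝ)/2) := Real.Gamma_pos_of_pos (by linarith)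
  have hGph : (0:ℝ) < Real.Gamma ((1:ℝ)/2) := Real.Gamma_pos_of_pos (by norm_num)
  have hGpz : ∀ z : ι, (0:ℝ) < Real.Gamma ((c z : ℝ) + 1/2) := fun z =>
    Real.Gamma_pos_of_pos (by positivity)
  have hprod : (0:ℝ) < ∏ z, Real.Gamma ((c z : ℝ) + 1/2) / Real.Gamma (1/2) :=
    Finset.prod_pos fun z _ => div_pos (hGpz z) hGph
  have hlog : Real.log (Real.Gamma ((κ:ℝ)/2) / Real.Gamma ((n:ℝ) + (κ:ℝ)/2)
        * ∏ z, Real.Gamma ((c z : ℝ) + 1/2) / Real.Gamma (1/2))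
      = G₀ - Real.log (Real.Gamma ((n:ℝ) + (κ:ℝ)/2))
        + ∑ z, (Real.log (Real.Gamma ((c z : ℝ) + 1/2)) - Gh) := by
    rw [Real.log_mul (by positivity) hprod.ne', Real.log_div hGp1.ne' hGp2.ne',
      Real.log_prod (fun z _ => (div_pos (hGpz z) hGph).ne')]
    congr 1
    exact Finset.sum_congr rfl fun z _ => Real.log_div (hGpz z).ne' hGph.ne'
  have hsumR : (∑ z, (c z : ℝ)) = (n:ℝ) := by exact_mod_cast hsum
  have hsplit : ∑ z, (Real.log (Real.Gamma ((c z:ℝ)+1/2)) - ((c z:ℝ) * Real.log (c z) - c z))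
      = ∑ z, (Real.log (Real.Gamma ((c z:ℝ)+1/2)) - Gh)
        - (∑ z, (c z:ℝ) * Real.log (c z)) + (n:ℝ) + (κ:ℝ) * Gh := by
    rw [Finset.sum_sub_distrib, Finset.sum_sub_distrib, Finset.sum_sub_distrib, hsumR,
      Finset.sum_const, Finset.card_univ, nsmul_eq_mul]
    ring
  set E0 := Real.log (Real.Gamma ((n:ℝ) + (κ:ℝ)/2))
      - ((n:ℝ) * Real.log n - n + ((κ:ℝ)-1)/2 * Real.log n) with hE0def
  have key : Real.log (Real.Gamma ((κ:ℝ)/2) / Real.Gamma ((n:ℝ) + (κ:ℝ)/2)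
        * ∏ z, Real.Gamma ((c z : ℝ) + 1/2) / Real.Gamma (1/2))
      - (∑ z, (c z : ℝ) * Real.log (c z) - (n:ℝ) * Real.log n
          - ((κ:ℝ) - 1)/2 * Real.log n)
      = (G₀ - (κ:ℝ) * Gh) - E0
        + ∑ z, (Real.log (Real.Gamma ((c z:ℝ)+1/2)) - ((c z:ℝ) * Real.log (c z) - c z)) := by
    rw [hlog, hsplit, hE0def]; ring
  have hE0 : |E0| ≤ A₀ := h₀ n hn
  have hEz : |∑ z, (Real.log (Real.Gamma ((c z:ℝ)+1/2)) - ((c z:ℝ) * Real.log (c z) - c z))|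
      ≤ (κ:ℝ) * A₁ := by
    calc |∑ z, (Real.log (Real.Gamma ((c z:ℝ)+1/2)) - ((c z:ℝ) * Real.log (c z) - c z))|
        ≤ ∑ z, |Real.log (Real.Gamma ((c z:ℝ)+1/2)) - ((c z:ℝ) * Real.log (c z) - c z)| :=
          Finset.abs_sum_le_sum_abs _ _
      _ ≤ ∑ _z : ι, A₁ := Finset.sum_le_sum fun z _ => h₁ (c z)
      _ = (κ:ℝ) * A₁ := by rw [Finset.sum_const, Finset.card_univ, nsmul_eq_mul]
  rw [key, abs_le]
  clear_value κ G₀ Gh E0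
  obtain ⟨he1, he2⟩ := abs_le.mp hE0
  obtain ⟨hz1, hz2⟩ := abs_le.mp hEz
  have c1 := le_abs_self G₀
  have c2 := neg_abs_le G₀
  have c3 := le_abs_self Gh
  have c4 := neg_abs_le Gh
  have hκnn : (0:ℝ) ≤ (κ:ℝ) := Nat.cast_nonneg κ
  have d3 : (κ:ℝ) * Gh ≤ (κ:ℝ) * |Gh| := mul_le_mul_of_nonneg_left c3 hκnn
  have d4 : (κ:ℝ) * (-|Gh|) ≤ (κ:ℝ) * Gh := mul_le_mul_of_nonneg_left c4 hκnn
  have d4' : -((κ:ℝ) * |Gh|) ≤ (κ:ℝ) * Gh := by linarith [d4]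
  constructor
  · linarith [c2, d3, he2, hz1]
  · linarith [c1, d4', he1, hz2]

lemma info_term {n a b₁ b₂ : ℕ} (hn : 1 ≤ n) (h1 : a ≤ b₁) (h2 : a ≤ b₂) :
    (n:ℝ) * (((a:ℝ)/n) * Real.log (((a:ℝ)/n) / (((b₁:ℝ)/n) * ((b₂:ℝ)/n))))
    = (a:ℝ) * (Real.log a - Real.log b₁ - Real.log b₂ + Real.log n) := by
  have hn0 : (0:ℝ) < n := by exact_mod_cast hn
  rcases Nat.eq_zero_or_pos a with rfl | ha
  · simp
  · have ha0 : (0:ℝ) < a := by exact_mod_cast ha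
    have hb₁ : (0:ℝ) < b₁ := by exact_mod_cast lt_of_lt_of_le ha h1
    have hb₂ : (0:ℝ) < b₂ := by exact_mod_cast lt_of_lt_of_le ha h2
    have e1 : (n:ℝ) * (((a:ℝ)/n) * Real.log (((a:ℝ)/n) / (((b₁:ℝ)/n) * ((b₂:ℝ)/n))))
        = (a:ℝ) * Real.log (((a:ℝ)/n) / (((b₁:ℝ)/n) * ((b₂:ℝ)/n))) := by
      field_simp
    rw [e1]
    congr 1
    rw [Real.log_div (by positivity) (by positivity),
      Real.log_mul (by positivity) (by positivity),
      Real.log_div ha0.ne' hn0.ne', Real.log_div hb₁.ne' hn0.ne',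
      Real.log_div hb₂.ne' hn0.ne']
    ring

lemma info_identity (α β : ℕ) (n : ℕ) (hn : 1 ≤ n) (c : Fin α × Fin β → ℕ)
    (hsum : ∑ z, c z = n)
    (c₁ : Fin α → ℕ) (hc₁ : ∀ x, c₁ x = ∑ y, c (x, y))
    (c₂ : Fin β → ℕ) (hc₂ : ∀ y, c₂ y = ∑ x, c (x, y)) :
    (n : ℝ) * (∑ x, ∑ y, ((c (x, y) : ℝ) / n) *
        Real.log (((c (x, y) : ℝ) / n) / (((c₁ x : ℝ) / n) * ((c₂ y : ℝ) / n))))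
    = (∑ z : Fin α × Fin β, (c z:ℝ) * Real.log (c z)) - (∑ x, (c₁ x:ℝ) * Real.log (c₁ x))
      - (∑ y, (c₂ y:ℝ) * Real.log (c₂ y)) + (n:ℝ) * Real.log n := by
  have hn0 : (0:ℝ) < (n:ℝ) := by exact_mod_cast hn
  have step1 : (n : ℝ) * (∑ x, ∑ y, ((c (x, y) : ℝ) / n) *
        Real.log (((c (x, y) : ℝ) / n) / (((c₁ x : ℝ) / n) * ((c₂ y : ℝ) / n))))
      = ∑ x, ∑ y, (c (x, y) : ℝ) * (Real.log (c (x, y)) - Real.log (c₁ x)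
          - Real.log (c₂ y) + Real.log n) := by
    rw [Finset.mul_sum]
    refine Finset.sum_congr rfl fun x _ => ?_
    rw [Finset.mul_sum]
    refine Finset.sum_congr rfl fun y _ => ?_
    exact info_term hn
      (by rw [hc₁ x]; exact Finset.single_le_sum (f := fun y => c (x, y)) (fun i _ => Nat.zero_le _) (mem_univ y))
      (by rw [hc₂ y]; exact Finset.single_le_sum (f := fun x => c (x, y)) (fun i _ => Nat.zero_le _) (mem_univ x))
  rw [step1]
  have expand : ∀ x y, (c (x, y) : ℝ) * (Real.log (c (x, y)) - Real.log (c₁ x)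
        - Real.log (c₂ y) + Real.log n)
      = (c (x, y) : ℝ) * Real.log (c (x, y)) - (c (x, y) : ℝ) * Real.log (c₁ x)
        - (c (x, y) : ℝ) * Real.log (c₂ y) + (c (x, y) : ℝ) * Real.log n := by
    intro x y; ring
  simp_rw [expand]
  have T1 : ∑ x, ∑ y, (c (x, y):ℝ) * Real.log (c (x, y))
      = ∑ z : Fin α × Fin β, (c z:ℝ) * Real.log (c z) :=
    (Fintype.sum_prod_type (fun z : Fin α × Fin β => (c z:ℝ) * Real.log (c z))).symm
  have T2 : ∑ x, ∑ y, (c (x, y):ℝ) * Real.log (c₁ x) = ∑ x, (c₁ x:ℝ) * Real.log (c₁ x) := by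
    refine Finset.sum_congr rfl fun x _ => ?_
    rw [← Finset.sum_mul]
    congr 1
    rw [hc₁ x]
    push_cast
    rfl
  have T3 : ∑ x, ∑ y, (c (x, y):ℝ) * Real.log (c₂ y) = ∑ y, (c₂ y:ℝ) * Real.log (c₂ y) := by
    rw [Finset.sum_comm]
    refine Finset.sum_congr rfl fun y _ => ?_
    rw [← Finset.sum_mul]
    congr 1
    rw [hc₂ y]
    push_cast
    rfl
  have T4 : ∑ x : Fin α, ∑ y : Fin β, (c (x, y):ℝ) * Real.log n = (n:ℝ) * Real.log n := by
    simp_rw [← Finset.sum_mul]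
    congr 1
    rw [(Fintype.sum_prod_type (fun z : Fin α × Fin β => (c z : ℝ))).symm]
    exact_mod_cast congrArg (Nat.cast (R := ℝ)) hsum
  simp only [Finset.sum_sub_distrib, Finset.sum_add_distrib]
  rw [T1, T2, T3, T4]

/-- For Bayes measures with Jeffreys (Dirichlet-1/2) priors over alphabets of
sizes `α`, `β`, `αβ`, the log Bayes factor satisfies
`log[Qⁿ(i,j)/(Qⁿ(i)Qⁿ(j))] = n·Iⁿ(i,j) - ((α-1)(β-1)/2)·log n + O(1)`, uniformly over
counts, where `Iⁿ(i,j)` is the empirical mutual information. -/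
theorem log_bayes_factor_asymptotics (α β : ℕ) (hα : 2 ≤ α) (hβ : 2 ≤ β) :
    ∃ C : ℝ, ∀ n : ℕ, 1 ≤ n → ∀ c : Fin α × Fin β → ℕ, ∑ z, c z = n →
      ∀ c₁ : Fin α → ℕ, (∀ x, c₁ x = ∑ y, c (x, y)) →
      ∀ c₂ : Fin β → ℕ, (∀ y, c₂ y = ∑ x, c (x, y)) →
      |Real.log
          ((Real.Gamma ((α * β : ℕ) / 2) / Real.Gamma (n + (α * β : ℕ) / 2) *
              ∏ z : Fin α × Fin β, Real.Gamma (c z + 1/2) / Real.Gamma (1/2)) /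
            ((Real.Gamma (α / 2) / Real.Gamma (n + α / 2) *
                ∏ x, Real.Gamma (c₁ x + 1/2) / Real.Gamma (1/2)) *
             (Real.Gamma (β / 2) / Real.Gamma (n + β / 2) *
                ∏ y, Real.Gamma (c₂ y + 1/2) / Real.Gamma (1/2))))
        - ((n : ℝ) * (∑ x, ∑ y, ((c (x, y) : ℝ) / n) *
              Real.log (((c (x, y) : ℝ) / n) / (((c₁ x : ℝ) / n) * ((c₂ y : ℝ) / n))))
            - ((α : ℝ) - 1) * ((β : ℝ) - 1) / 2 * Real.log n)| ≤ C := by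
  have hcab : Fintype.card (Fin α × Fin β) = α * β := by simp
  have hca : Fintype.card (Fin α) = α := Fintype.card_fin α
  have hcb : Fintype.card (Fin β) = β := Fintype.card_fin β
  obtain ⟨A₁, hA₁, hQ1⟩ := logQ_bound (ι := Fin α × Fin β)
    (by rw [hcab]; exact Nat.mul_pos (by omega) (by omega))
  obtain ⟨A₂, hA₂, hQ2⟩ := logQ_bound (ι := Fin α) (by rw [hca]; omega)
  obtain ⟨A₃, hA₃, hQ3⟩ := logQ_bound (ι := Fin β) (by rw [hcb]; omega)
  rw [hcab] at hQ1
  rw [hca] at hQ2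
  rw [hcb] at hQ3
  refine ⟨A₁ + A₂ + A₃, ?_⟩
  intro n hn c hsum c₁ hc₁ c₂ hc₂
  have hn0 : (0:ℝ) < (n:ℝ) := by exact_mod_cast hn
  have hs1 : ∑ x, c₁ x = n := by
    rw [← hsum, Fintype.sum_prod_type]
    exact Finset.sum_congr rfl fun x _ => hc₁ x
  have hs2 : ∑ y, c₂ y = n := by
    rw [← hsum, Fintype.sum_prod_type_right]
    exact Finset.sum_congr rfl fun y _ => hc₂ y
  have H1 := hQ1 n hn c hsum
  have H2 := hQ2 n hn c₁ hs1
  have H3 := hQ3 n hn c₂ hs2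
  -- positivity of the three Q's
  have habp : (0:ℝ) < ((α*β : ℕ):ℝ) := by
    exact_mod_cast Nat.mul_pos (show 0 < α by omega) (show 0 < β by omega)
  have hap : (0:ℝ) < ((α : ℕ):ℝ) := by exact_mod_cast (show 0 < α by omega)
  have hbp : (0:ℝ) < ((β : ℕ):ℝ) := by exact_mod_cast (show 0 < β by omega)
  have hGh : (0:ℝ) < Real.Gamma ((1:ℝ)/2) := Real.Gamma_pos_of_pos (by norm_num)
  have hQab : (0:ℝ) < Real.Gamma (((α*β:ℕ):ℝ)/2) / Real.Gamma ((n:ℝ) + ((α*β:ℕ):ℝ)/2) *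
      ∏ z : Fin α × Fin β, Real.Gamma ((c z : ℝ) + 1/2) / Real.Gamma (1/2) :=
    mul_pos (div_pos (Real.Gamma_pos_of_pos (by linarith))
        (Real.Gamma_pos_of_pos (by linarith)))
      (Finset.prod_pos fun z _ => div_pos (Real.Gamma_pos_of_pos (by positivity)) hGh)
  have hQa : (0:ℝ) < Real.Gamma (((α:ℕ):ℝ)/2) / Real.Gamma ((n:ℝ) + ((α:ℕ):ℝ)/2) *
      ∏ x, Real.Gamma ((c₁ x : ℝ) + 1/2) / Real.Gamma (1/2) :=
    mul_pos (div_pos (Real.Gamma_pos_of_pos (by linarith))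
        (Real.Gamma_pos_of_pos (by linarith)))
      (Finset.prod_pos fun x _ => div_pos (Real.Gamma_pos_of_pos (by positivity)) hGh)
  have hQb : (0:ℝ) < Real.Gamma (((β:ℕ):ℝ)/2) / Real.Gamma ((n:ℝ) + ((β:ℕ):ℝ)/2) *
      ∏ y, Real.Gamma ((c₂ y : ℝ) + 1/2) / Real.Gamma (1/2) :=
    mul_pos (div_pos (Real.Gamma_pos_of_pos (by linarith))
        (Real.Gamma_pos_of_pos (by linarith)))
      (Finset.prod_pos fun y _ => div_pos (Real.Gamma_pos_of_pos (by positivity)) hGh)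
  have hlogsplit : Real.log
        ((Real.Gamma (((α*β:ℕ):ℝ)/2) / Real.Gamma ((n:ℝ) + ((α*β:ℕ):ℝ)/2) *
            ∏ z : Fin α × Fin β, Real.Gamma ((c z : ℝ) + 1/2) / Real.Gamma (1/2)) /
          ((Real.Gamma (((α:ℕ):ℝ)/2) / Real.Gamma ((n:ℝ) + ((α:ℕ):ℝ)/2) *
              ∏ x, Real.Gamma ((c₁ x : ℝ) + 1/2) / Real.Gamma (1/2)) *
           (Real.Gamma (((β:ℕ):ℝ)/2) / Real.Gamma ((n:ℝ) + ((β:ℕ):ℝ)/2) *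
              ∏ y, Real.Gamma ((c₂ y : ℝ) + 1/2) / Real.Gamma (1/2))))
      = Real.log (Real.Gamma (((α*β:ℕ):ℝ)/2) / Real.Gamma ((n:ℝ) + ((α*β:ℕ):ℝ)/2) *
            ∏ z : Fin α × Fin β, Real.Gamma ((c z : ℝ) + 1/2) / Real.Gamma (1/2))
        - Real.log (Real.Gamma (((α:ℕ):ℝ)/2) / Real.Gamma ((n:ℝ) + ((α:ℕ):ℝ)/2) *
              ∏ x, Real.Gamma ((c₁ x : ℝ) + 1/2) / Real.Gamma (1/2))
        - Real.log (Real.Gamma (((β:ℕ):ℝ)/2) / Real.Gamma ((n:ℝ) + ((β:ℕ):ℝ)/2) *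
              ∏ y, Real.Gamma ((c₂ y : ℝ) + 1/2) / Real.Gamma (1/2)) := by
    rw [Real.log_div hQab.ne' (mul_pos hQa hQb).ne', Real.log_mul hQa.ne' hQb.ne']
    ring
  have hI := info_identity α β n hn c hsum c₁ hc₁ c₂ hc₂
  have key : Real.log
        ((Real.Gamma (((α*β:ℕ):ℝ)/2) / Real.Gamma ((n:ℝ) + ((α*β:ℕ):ℝ)/2) *
            ∏ z : Fin α × Fin β, Real.Gamma ((c z : ℝ) + 1/2) / Real.Gamma (1/2)) /
          ((Real.Gamma (((α:ℕ):ℝ)/2) / Real.Gamma ((n:ℝ) + ((α:ℕ):ℝ)/2) *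
              ∏ x, Real.Gamma ((c₁ x : ℝ) + 1/2) / Real.Gamma (1/2)) *
           (Real.Gamma (((β:ℕ):ℝ)/2) / Real.Gamma ((n:ℝ) + ((β:ℕ):ℝ)/2) *
              ∏ y, Real.Gamma ((c₂ y : ℝ) + 1/2) / Real.Gamma (1/2))))
        - ((n : ℝ) * (∑ x, ∑ y, ((c (x, y) : ℝ) / n) *
              Real.log (((c (x, y) : ℝ) / n) / (((c₁ x : ℝ) / n) * ((c₂ y : ℝ) / n))))
            - ((α : ℝ) - 1) * ((β : ℝ) - 1) / 2 * Real.log n)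
      = (Real.log (Real.Gamma (((α*β:ℕ):ℝ)/2) / Real.Gamma ((n:ℝ) + ((α*β:ℕ):ℝ)/2) *
            ∏ z : Fin α × Fin β, Real.Gamma ((c z : ℝ) + 1/2) / Real.Gamma (1/2))
          - (∑ z : Fin α × Fin β, (c z : ℝ) * Real.log (c z) - (n:ℝ) * Real.log n
              - (((α*β:ℕ):ℝ) - 1)/2 * Real.log n))
        - (Real.log (Real.Gamma (((α:ℕ):ℝ)/2) / Real.Gamma ((n:ℝ) + ((α:ℕ):ℝ)/2) *
              ∏ x, Real.Gamma ((c₁ x : ℝ) + 1/2) / Real.Gamma (1/2))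
          - (∑ x, (c₁ x : ℝ) * Real.log (c₁ x) - (n:ℝ) * Real.log n
              - (((α:ℕ):ℝ) - 1)/2 * Real.log n))
        - (Real.log (Real.Gamma (((β:ℕ):ℝ)/2) / Real.Gamma ((n:ℝ) + ((β:ℕ):ℝ)/2) *
              ∏ y, Real.Gamma ((c₂ y : ℝ) + 1/2) / Real.Gamma (1/2))
          - (∑ y, (c₂ y : ℝ) * Real.log (c₂ y) - (n:ℝ) * Real.log n
              - (((β:ℕ):ℝ) - 1)/2 * Real.log n)) := by
    rw [hlogsplit, hI]
    push_cast
    ring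
  rw [key, abs_le]
  obtain ⟨u1, u2⟩ := abs_le.mp H1
  obtain ⟨v1, v2⟩ := abs_le.mp H2
  obtain ⟨w1, w2⟩ := abs_le.mp H3
  constructor <;> linarith
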